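/- Let 0 < a < b, let f : ℝ → ℝ be a continuous probability density supported in [0, b], and let ε > 0 satisfy ε < (b - a)/3 and suppose f is strictly positive on the interval [b - 2ε, b - ε]. Then there exists K ∈ ℕ such that for all k ≥ K, a^k < ∫₀^b y^k f(y) dy. -/

import Mathlib

/-- Deterministic vs. random, case `a < b`. If `f` is a continuous
probability density supported in `[0, b]` which is strictly positive on
`[b - 2ε, b - ε]` where `0 < ε < (b - a)/3`, then the powers `a^k` are eventually
strictly smaller than the `k`-th moments of `f`. -/
theorem deterministic_preferred_to_random_of_lt
    (a b : ℝ) (ha : 0 < a) (hab : a < b)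
    (f : ℝ → ℝ) (hfc : Continuous f) (hf0 : ∀ x, 0 ≤ f x)
    (hsupp : ∀ x ∉ Set.Icc 0 b, f x = 0)
    (hfint : ∫ y in (0:ℝ)..b, f y = 1)
    (ε : ℝ) (hε : 0 < ε) (hε3 : ε < (b - a) / 3)
    (hpos : ∀ y ∈ Set.Icc (b - 2 * ε) (b - ε), 0 < f y) :
    ∃ K : ℕ, ∀ k ≥ K, a ^ k < ∫ y in (0:ℝ)..b, y ^ k * f y := by
  set c := b - 2 * ε with hc
  set d := b - ε with hd
  have hac : a < c := by simp only [hc]; linarith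
  have hcd : c < d := by simp only [hc, hd]; linarith
  have hdb : d < b := by simp only [hd]; linarith
  have hc0 : 0 < c := lt_trans ha hac
  -- minimum of f on [c,d]
  obtain ⟨x₀, hx₀, hmin⟩ := isCompact_Icc.exists_isMinOn ⟨c, le_refl c, hcd.le⟩
    hfc.continuousOn
  set m := f x₀ with hm
  have hm0 : 0 < m := hpos x₀ hx₀
  have hmε : 0 < m * ε := mul_pos hm0 hε
  -- integrability
  have hint : ∀ (k : ℕ) (u v : ℝ),
      IntervalIntegrable (fun y => y ^ k * f y) MeasureTheory.volume u v :=
    fun k u v => ((continuous_pow k).mul hfc).intervalIntegrable u v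
  -- key lower bound on the moment
  have key : ∀ k : ℕ, m * ε * c ^ k ≤ ∫ y in (0:ℝ)..b, y ^ k * f y := by
    intro k
    have hnn : ∀ u v : ℝ, 0 ≤ u → u ≤ v → (0:ℝ) ≤ ∫ y in u..v, y ^ k * f y := by
      intro u v hu huv
      exact intervalIntegral.integral_nonneg huv fun y hy =>
        mul_nonneg (pow_nonneg (le_trans hu hy.1) k) (hf0 y)
    have split1 : (∫ y in (0:ℝ)..b, y ^ k * f y)
        = (∫ y in (0:ℝ)..c, y ^ k * f y) + (∫ y in c..d, y ^ k * f y)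
          + (∫ y in d..b, y ^ k * f y) := by
      rw [intervalIntegral.integral_add_adjacent_intervals (hint k 0 c) (hint k c d),
        intervalIntegral.integral_add_adjacent_intervals (hint k 0 d) (hint k d b)]
    have hmid : m * ε * c ^ k ≤ ∫ y in c..d, y ^ k * f y := by
      have hconst : (∫ y in c..d, (c ^ k * m : ℝ)) = c ^ k * m * (d - c) := by
        simp [intervalIntegral.integral_const, smul_eq_mul]; ring
      have hdc : d - c = ε := by simp [hc, hd]; ring
      have : (∫ y in c..d, (c ^ k * m : ℝ)) ≤ ∫ y in c..d, y ^ k * f y := by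
        apply intervalIntegral.integral_mono_on hcd.le (intervalIntegrable_const)
          (hint k c d)
        intro y hy
        have hyc : c ≤ y := hy.1
        have h1 : c ^ k ≤ y ^ k := pow_le_pow_left₀ hc0.le hyc k
        have h2 : m ≤ f y := hmin ⟨hy.1, hy.2⟩
        exact mul_le_mul h1 h2 hm0.le (pow_nonneg (le_trans hc0.le hyc) k)
      calc m * ε * c ^ k = c ^ k * m * (d - c) := by rw [hdc]; ring
        _ = ∫ y in c..d, (c ^ k * m : ℝ) := hconst.symm
        _ ≤ _ := this
    have h1 := hnn 0 c le_rfl hc0.le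
    have h2 := hnn d b (by linarith) hdb.le
    linarith [split1 ▸ (by linarith : m * ε * c ^ k ≤
      (∫ y in (0:ℝ)..c, y ^ k * f y) + (∫ y in c..d, y ^ k * f y)
        + (∫ y in d..b, y ^ k * f y))]
  -- (a/c)^k → 0
  have hratio : Filter.Tendsto (fun k : ℕ => (a / c) ^ k) Filter.atTop (nhds 0) :=
    tendsto_pow_atTop_nhds_zero_of_lt_one (by positivity)
      ((div_lt_one hc0).mpr hac)
  have hev : ∀ᶠ k in Filter.atTop, (a / c) ^ k < m * ε :=
    hratio.eventually (gt_mem_nhds hmε)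
  obtain ⟨K, hK⟩ := Filter.eventually_atTop.mp hev
  refine ⟨K, fun k hk => ?_⟩
  have h1 : a ^ k < m * ε * c ^ k := by
    have := hK k hk
    have hak : a ^ k = (a / c) ^ k * c ^ k := by
      rw [div_pow, div_mul_cancel₀]
      positivity
    rw [hak]
    exact (mul_lt_mul_iff_of_pos_right (by positivity)).mpr this
  exact lt_of_lt_of_le h1 (key k)
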